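/- For the product basis |φ₀⟩=|00⟩, |φ₁⟩=|01⟩, |φ₊⟩=|+⟩⊗|+⟩, |φ₋⟩=|+⟩⊗|−⟩ of ℂ²⊗ℂ², the reciprocal vectors are |φ̃₀⟩=√2|−⟩⊗|0⟩, |φ̃₁⟩=√2|−⟩⊗|1⟩, |φ̃₊⟩=√2|1⟩⊗|+⟩, |φ̃₋⟩=√2|1⟩⊗|−⟩; in particular all four reciprocal vectors are product vectors. -/

import Mathlib

open Matrix Complex
open scoped Matrix Kronecker ComplexOrder

noncomputable section

abbrev Q2 := Fin 2 → ℂ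
abbrev V4 := Fin 2 × Fin 2 → ℂ
abbrev Op2 := Matrix (Fin 2) (Fin 2) ℂ
abbrev Op4 := Matrix (Fin 2 × Fin 2) (Fin 2 × Fin 2) ℂ

def ket0 : Q2 := ![1, 0]
def ket1 : Q2 := ![0, 1]
def ketP : Q2 := (Real.sqrt 2 : ℂ)⁻¹ • (ket0 + ket1)
def ketM : Q2 := (Real.sqrt 2 : ℂ)⁻¹ • (ket0 - ket1)

/-- tensor product of two qubit vectors -/
def tens (a b : Q2) : V4 := fun p => a p.1 * b p.2

/-- rank-one projector |v⟩⟨v| on one qubit -/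
def proj2 (v : Q2) : Op2 := Matrix.of fun i j => v i * star (v j)

/-- rank-one operator |v⟩⟨v| on two qubits -/
def proj (v : V4) : Op4 := Matrix.of fun i j => v i * star (v j)

/-- inner product ⟨u|v⟩ -/
def ip4 (u v : V4) : ℂ := star u ⬝ᵥ v

/-- expectation value ⟨u|M|u⟩ -/
def expVal (u : V4) (M : Op4) : ℂ := star u ⬝ᵥ (M *ᵥ u)

-- Bell states
def PhiP : V4 := (Real.sqrt 2 : ℂ)⁻¹ • (tens ket0 ket0 + tens ket1 ket1)
def PhiM : V4 := (Real.sqrt 2 : ℂ)⁻¹ • (tens ket0 ket0 - tens ket1 ket1)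
def PsiP : V4 := (Real.sqrt 2 : ℂ)⁻¹ • (tens ket0 ket1 + tens ket1 ket0)
def PsiM : V4 := (Real.sqrt 2 : ℂ)⁻¹ • (tens ket0 ket1 - tens ket1 ket0)

-- Example 1 states
def φ0 : V4 := tens ket0 ket0
def φ1 : V4 := tens ket0 ket1
def φP : V4 := tens ketP ketP
def φM : V4 := tens ketM ketM

-- Example 1 reciprocal vectors
def φt0 : V4 := (Real.sqrt 2 : ℂ) • PhiM
def φt1 : V4 := (Real.sqrt 2 : ℂ) • PsiM
def φtP : V4 := (Real.sqrt 2 : ℂ) • tens ket1 ketP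
def φtM : V4 := -((Real.sqrt 2 : ℂ) • tens ket1 ketM)

-- Example 2 states
def ψ0 : V4 := tens ket0 ket0
def ψ1 : V4 := tens ket0 ket1
def ψP : V4 := tens ketP ketP
def ψM : V4 := tens ketP ketM

-- Example 2 reciprocal vectors
def ψt0 : V4 := (Real.sqrt 2 : ℂ) • tens ketM ket0
def ψt1 : V4 := (Real.sqrt 2 : ℂ) • tens ketM ket1
def ψtP : V4 := (Real.sqrt 2 : ℂ) • tens ket1 ketP
def ψtM : V4 := (Real.sqrt 2 : ℂ) • tens ket1 ketM

/-- prior probabilities η₀=η₁=γ/(2(1+γ)), η₊=η₋=1/(2(1+γ)) -/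
def η (γ : ℝ) : Fin 4 → ℝ :=
  ![γ / (2 * (1 + γ)), γ / (2 * (1 + γ)), 1 / (2 * (1 + γ)), 1 / (2 * (1 + γ))]

lemma hs_aux : (Real.sqrt 2 : ℂ) * (Real.sqrt 2 : ℂ) = 2 := by
  have := Real.mul_self_sqrt (by norm_num : (0:ℝ) ≤ 2)
  exact_mod_cast this

lemma hs0_aux : (Real.sqrt 2 : ℂ) ≠ 0 := by
  simp only [ne_eq, Complex.ofReal_eq_zero]
  positivity

lemma hip_aux : ∀ i j : Fin 4,
    ip4 (![ψ0, ψ1, ψP, ψM] i) (![ψt0, ψt1, ψtP, ψtM] j) = if i = j then 1 else 0 := by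
  intro i j
  fin_cases i <;> fin_cases j <;>
    simp [ip4, dotProduct, ψ0, ψ1, ψP, ψM, ψt0, ψt1, ψtP, ψtM, tens, ket0, ket1, ketP, ketM,
      Fintype.sum_prod_type, Fin.sum_univ_two, Pi.smul_apply, smul_eq_mul] <;>
    field_simp <;> simp only [sq, hs_aux] <;> ring

lemma ip4_star (u v : V4) : star (ip4 u v) = ip4 v u := by
  simp [ip4, dotProduct, mul_comm]

lemma ip4_smul_right (c : ℂ) (u v : V4) : ip4 u (c • v) = c * ip4 u v := by
  simp [ip4, dotProduct, Finset.mul_sum, Pi.smul_apply, smul_eq_mul, mul_comm, mul_left_comm, mul_assoc]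

lemma ip4_add_right (u v w : V4) : ip4 u (v + w) = ip4 u v + ip4 u w := by
  simp [ip4, dotProduct, Finset.sum_add_distrib, mul_add]

lemma li_aux : LinearIndependent ℂ ![ψ0, ψ1, ψP, ψM] := by
  rw [Fintype.linearIndependent_iff]
  intro g h j
  have hrev : ∀ i k : Fin 4,
      ip4 (![ψt0, ψt1, ψtP, ψtM] k) (![ψ0, ψ1, ψP, ψM] i) = if i = k then 1 else 0 := by
    intro i k
    have := congrArg star (hip_aux i k)
    rw [ip4_star] at this
    simpa using this
  have hz : ip4 (![ψt0, ψt1, ψtP, ψtM] j) (∑ i, g i • ![ψ0, ψ1, ψP, ψM] i) = g j := by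
    rw [Fin.sum_univ_four]
    rw [ip4_add_right, ip4_add_right, ip4_add_right]
    rw [show (g 0 • ![ψ0, ψ1, ψP, ψM] 0 : V4) = g 0 • ![ψ0, ψ1, ψP, ψM] 0 from rfl]
    rw [ip4_smul_right, ip4_smul_right, ip4_smul_right, ip4_smul_right]
    have h0 := hrev 0 j
    have h1 := hrev 1 j
    have h2 := hrev 2 j
    have h3 := hrev 3 j
    fin_cases j <;> simp_all
  rw [h] at hz
  simpa [ip4] using hz.symm

/-- the Example-2 product vectors form a basis, the listed vectors
are their reciprocal vectors, and all four reciprocal vectors are product vectors. -/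
theorem stmt_9 :
    LinearIndependent ℂ ![ψ0, ψ1, ψP, ψM] ∧
    Submodule.span ℂ (Set.range ![ψ0, ψ1, ψP, ψM]) = ⊤ ∧
    (∀ i j : Fin 4,
      ip4 (![ψ0, ψ1, ψP, ψM] i) (![ψt0, ψt1, ψtP, ψtM] j) = if i = j then 1 else 0) ∧
    (∀ k : Fin 4, ∃ a b : Q2, ![ψt0, ψt1, ψtP, ψtM] k = tens a b) := by
  refine ⟨li_aux, ?_, hip_aux, ?_⟩
  · apply LinearIndependent.span_eq_top_of_card_eq_finrank li_aux
    simp [Module.finrank_fintype_fun_eq_card]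
  · intro k
    fin_cases k
    · exact ⟨(Real.sqrt 2 : ℂ) • ketM, ket0, by funext p; simp [ψt0, tens, mul_assoc]⟩
    · exact ⟨(Real.sqrt 2 : ℂ) • ketM, ket1, by funext p; simp [ψt1, tens, mul_assoc]⟩
    · exact ⟨(Real.sqrt 2 : ℂ) • ket1, ketP, by funext p; simp [ψtP, tens, mul_assoc]⟩
    · exact ⟨(Real.sqrt 2 : ℂ) • ket1, ketM, by funext p; simp [ψtM, tens, mul_assoc]⟩
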